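/- Let c_1, …, c_n be positive integers and set T := (1 − ε) Σ_{i=1}^n c_i with ε = 1/10. Consider the system problem with k = 2, n players, value functions v_i(x) = x, decision weights h_i(1) = 1 − ε and h_i(2) = ε for all i, and feasibility constraints: for each outcome l ∈ {1,2}, the allocation profile y(l) must satisfy y_i(l) ≤ c_i for all i ∈ [n] and Σ_{i=1}^n y_i(l) ≤ (Σ_{i=1}^n c_i)/2. Let W_ps denote the optimal value of this system problem (the supremum over permutation profiles π ∈ (S_2)^n and ordered allocations z with z_i(1) ≥ z_i(2) ≥ 0 satisfying the constraints, of Σ_i [h_i(1) v_i(z_i(1)) + h_i(2) v_i(z_i(2))]). Then W_ps ≥ T if and only if there exists a subset S ⊆ [n] with Σ_{i∈S} c_i = Σ_{i∉S} c_i. -/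
import Mathlib


open Finset

private lemma fin2cases (a : Fin 2) : a = 0 ∨ a = 1 := by revert a; decide

private lemma perm2 (e : Equiv.Perm (Fin 2)) :
    (e 0 = 0 ∧ e 1 = 1) ∨ (e 0 = 1 ∧ e 1 = 0) := by
  have hne : e 0 ≠ e 1 := fun h => absurd (e.injective h) (by decide)
  rcases fin2cases (e 0) with h0 | h0 <;> rcases fin2cases (e 1) with h1 | h1 <;> simp_all

/-- (NP-hardness gadget.) With `k = 2`, linear value functions,
weights `h i = (1 - ε, ε)` with `ε = 1/10`, and feasibility constraints
`y i ≤ c i` and `∑ i, y i ≤ (∑ i, c i)/2` for each outcome, the optimal value `W_ps`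
of the system problem satisfies `W_ps ≥ T := (1 - ε) ∑ i, c i` if and only if an
integer partition of `(c i)` exists. -/
theorem stmt14 (n : ℕ) (c : Fin n → ℕ) (hc : ∀ i, 0 < c i) :
    (1 - (1 / 10 : ℝ)) * ∑ i, (c i : ℝ) ≤
      sSup {W : ℝ | ∃ (π : Fin n → Equiv.Perm (Fin 2)) (z : Fin n → Fin 2 → ℝ),
        (∀ i, z i 1 ≤ z i 0) ∧ (∀ i, 0 ≤ z i 1) ∧
        (∀ i, ∀ l : Fin 2, z i (π i l) ≤ (c i : ℝ)) ∧
        (∀ l : Fin 2, ∑ i, z i (π i l) ≤ (∑ i, (c i : ℝ)) / 2) ∧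
        W = ∑ i, ((1 - (1 / 10 : ℝ)) * z i 0 + (1 / 10 : ℝ) * z i 1)}
    ↔ ∃ S : Finset (Fin n), ∑ i ∈ S, c i = ∑ i ∈ Sᶜ, c i := by
  set C : ℝ := ∑ i, (c i : ℝ) with hC
  set P : Set ℝ := {W : ℝ | ∃ (π : Fin n → Equiv.Perm (Fin 2)) (z : Fin n → Fin 2 → ℝ),
        (∀ i, z i 1 ≤ z i 0) ∧ (∀ i, 0 ≤ z i 1) ∧
        (∀ i, ∀ l : Fin 2, z i (π i l) ≤ (c i : ℝ)) ∧
        (∀ l : Fin 2, ∑ i, z i (π i l) ≤ C / 2) ∧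
        W = ∑ i, ((1 - (1 / 10 : ℝ)) * z i 0 + (1 / 10 : ℝ) * z i 1)} with hP
  -- key strict bound when no partition exists
  have key : ∀ W ∈ P, (∀ S : Finset (Fin n), ∑ i ∈ S, c i ≠ ∑ i ∈ Sᶜ, c i) →
      W ≤ (9/10) * C - (2/5) := by
    rintro W ⟨π, z, h1, h2, h3, h4, hW⟩ hno
    set S : Finset (Fin n) := Finset.univ.filter (fun i => π i 0 = 0) with hSdef
    have hmemS : ∀ i ∈ S, π i 0 = 0 ∧ π i 1 = 1 := by
      intro i hi
      have h0 : π i 0 = 0 := (Finset.mem_filter.mp hi).2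
      rcases perm2 (π i) with h | h
      · exact h
      · rw [h.1] at h0; exact absurd h0 (by decide)
    have hmemSc : ∀ i ∈ Sᶜ, π i 0 = 1 ∧ π i 1 = 0 := by
      intro i hi
      have h0 : ¬ π i 0 = 0 := by
        intro h
        exact (Finset.mem_compl.mp hi) (Finset.mem_filter.mpr ⟨Finset.mem_univ i, h⟩)
      rcases perm2 (π i) with h | h
      · exact absurd h.1 h0
      · exact h
    have split0 : ∑ i, z i (π i 0) = (∑ i ∈ S, z i 0) + (∑ i ∈ Sᶜ, z i 1) := by
      rw [← Finset.sum_add_sum_compl S (fun i => z i (π i 0))]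
      congr 1
      · exact Finset.sum_congr rfl fun i hi => by rw [(hmemS i hi).1]
      · exact Finset.sum_congr rfl fun i hi => by rw [(hmemSc i hi).1]
    have split1 : ∑ i, z i (π i 1) = (∑ i ∈ S, z i 1) + (∑ i ∈ Sᶜ, z i 0) := by
      rw [← Finset.sum_add_sum_compl S (fun i => z i (π i 1))]
      congr 1
      · exact Finset.sum_congr rfl fun i hi => by rw [(hmemS i hi).2]
      · exact Finset.sum_congr rfl fun i hi => by rw [(hmemSc i hi).2]
    have hz0c : ∀ i, z i 0 ≤ (c i : ℝ) := by
      intro i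
      have := h3 i ((π i).symm 0)
      rwa [Equiv.apply_symm_apply] at this
    have hA : ∑ i ∈ S, z i 0 ≤ ∑ i ∈ S, (c i : ℝ) := Finset.sum_le_sum fun i _ => hz0c i
    have hB : ∑ i ∈ Sᶜ, z i 0 ≤ ∑ i ∈ Sᶜ, (c i : ℝ) := Finset.sum_le_sum fun i _ => hz0c i
    have hA1 : (0:ℝ) ≤ ∑ i ∈ S, z i 1 := Finset.sum_nonneg fun i _ => h2 i
    have hB1 : (0:ℝ) ≤ ∑ i ∈ Sᶜ, z i 1 := Finset.sum_nonneg fun i _ => h2 i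
    have c0 : (∑ i ∈ S, z i 0) + (∑ i ∈ Sᶜ, z i 1) ≤ C / 2 := by
      rw [← split0]; exact h4 0
    have c1 : (∑ i ∈ S, z i 1) + (∑ i ∈ Sᶜ, z i 0) ≤ C / 2 := by
      rw [← split1]; exact h4 1
    have hab : (∑ i ∈ S, (c i : ℝ)) + (∑ i ∈ Sᶜ, (c i : ℝ)) = C :=
      Finset.sum_add_sum_compl S _
    have hgapN : (∑ i ∈ S, c i) + 1 ≤ (∑ i ∈ Sᶜ, c i) ∨
        (∑ i ∈ Sᶜ, c i) + 1 ≤ (∑ i ∈ S, c i) := by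
      have := hno S; omega
    have hgap : (∑ i ∈ S, (c i : ℝ)) + 1 ≤ (∑ i ∈ Sᶜ, (c i : ℝ)) ∨
        (∑ i ∈ Sᶜ, (c i : ℝ)) + 1 ≤ (∑ i ∈ S, (c i : ℝ)) := by
      rcases hgapN with h | h
      · left; exact_mod_cast h
      · right; exact_mod_cast h
    have hW2 : W = (1 - (1/10 : ℝ)) * ((∑ i ∈ S, z i 0) + (∑ i ∈ Sᶜ, z i 0)) +
        (1/10 : ℝ) * ((∑ i ∈ S, z i 1) + (∑ i ∈ Sᶜ, z i 1)) := by
      rw [hW, Finset.sum_add_distrib, ← Finset.mul_sum, ← Finset.mul_sum,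
        ← Finset.sum_add_sum_compl S (fun i => z i 0),
        ← Finset.sum_add_sum_compl S (fun i => z i 1)]
    rcases hgap with h | h
    · linarith
    · linarith
  -- general upper bound (for BddAbove)
  have ub : ∀ W ∈ P, W ≤ (9/10) * C := by
    rintro W ⟨π, z, h1, h2, h3, h4, hW⟩
    have hz0c : ∀ i, z i 0 ≤ (c i : ℝ) := by
      intro i
      have := h3 i ((π i).symm 0)
      rwa [Equiv.apply_symm_apply] at this
    have hsum0 : ∑ i, z i 0 ≤ C := Finset.sum_le_sum fun i _ => hz0c i
    have hpt : ∀ i, z i (π i 0) + z i (π i 1) = z i 0 + z i 1 := by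
      intro i
      rcases perm2 (π i) with ⟨ha, hb⟩ | ⟨ha, hb⟩ <;> rw [ha, hb] <;> ring
    have hsum01 : (∑ i, z i 0) + (∑ i, z i 1) ≤ C := by
      have h40 := h4 0
      have h41 := h4 1
      have : (∑ i, z i 0) + (∑ i, z i 1) = (∑ i, z i (π i 0)) + (∑ i, z i (π i 1)) := by
        rw [← Finset.sum_add_distrib, ← Finset.sum_add_distrib]
        exact Finset.sum_congr rfl fun i _ => (hpt i).symm
      linarith
    rw [hW, Finset.sum_add_distrib, ← Finset.mul_sum, ← Finset.mul_sum]
    linarith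
  have h0P : (0 : ℝ) ∈ P := by
    refine ⟨fun _ => 1, fun _ _ => 0, fun i => le_refl _, fun i => le_refl _,
      fun i l => by positivity, fun l => by
        simp only [Finset.sum_const_zero]
        positivity, by simp⟩
  have hbdd : BddAbove P := ⟨(9/10) * C, fun W hW => ub W hW⟩
  constructor
  · -- forward direction
    intro h
    by_contra hno
    push_neg at hno
    have hle : sSup P ≤ (9/10) * C - (2/5) :=
      csSup_le ⟨0, h0P⟩ (fun W hW => key W hW hno)
    have : (1 - (1/10 : ℝ)) * C ≤ (9/10) * C - (2/5) := le_trans h hle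
    linarith
  · -- backward direction
    rintro ⟨S, hS⟩
    have hCsplit : (∑ i ∈ S, (c i : ℝ)) + (∑ i ∈ Sᶜ, (c i : ℝ)) = C :=
      Finset.sum_add_sum_compl S _
    have hSR : (∑ i ∈ S, (c i : ℝ)) = (∑ i ∈ Sᶜ, (c i : ℝ)) := by exact_mod_cast hS
    have hShalf : (∑ i ∈ S, (c i : ℝ)) = C / 2 := by linarith
    have hSchalf : (∑ i ∈ Sᶜ, (c i : ℝ)) = C / 2 := by linarith
    have hmem : (1 - (1/10 : ℝ)) * C ∈ P := by
      refine ⟨fun i => if i ∈ S then 1 else Equiv.swap 0 1,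
        fun i l => if l = 0 then (c i : ℝ) else 0, ?_, ?_, ?_, ?_, ?_⟩
      · intro i; simp
      · intro i; simp
      · intro i l
        by_cases h : i ∈ S <;> simp only [h, ite_true, ite_false] <;> split <;> simp
      · intro l
        rcases fin2cases l with rfl | rfl
        · have hpt : ∀ i : Fin n,
              (if ((if i ∈ S then (1 : Equiv.Perm (Fin 2)) else Equiv.swap 0 1) 0 = 0)
                then (c i : ℝ) else 0) = if i ∈ S then (c i : ℝ) else 0 := by
            intro i
            by_cases h : i ∈ S <;> simp [h, Equiv.swap_apply_left]
          simp only [hpt]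
          rw [Finset.sum_ite_mem, Finset.univ_inter, hShalf]
        · have hpt : ∀ i : Fin n,
              (if ((if i ∈ S then (1 : Equiv.Perm (Fin 2)) else Equiv.swap 0 1) 1 = 0)
                then (c i : ℝ) else 0) = if i ∈ Sᶜ then (c i : ℝ) else 0 := by
            intro i
            by_cases h : i ∈ S <;> simp [h, Equiv.swap_apply_right]
          simp only [hpt]
          rw [Finset.sum_ite_mem, Finset.univ_inter, hSchalf]
      · have h10 : (1 : Fin 2) ≠ 0 := by decide
        dsimp only
        rw [hC, Finset.mul_sum]
        refine Finset.sum_congr rfl fun i _ => ?_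
        simp [h10]
    exact le_csSup hbdd hmem
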